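/- (Proposition 4.7.) Let n ≥ 1 and 0 ≤ k ≤ n be integers, and let D = (d; m+1, ..., m+1, m, ..., m) ∈ ℤ^{1+n} be the balanced class whose first k multiplicities equal m+1 and whose remaining n−k multiplicities equal m. Assume d ≥ 0, m ≥ 0, 1 ≤ χ(D) < (n−1)/8, and that ℓ := min(k, n−k) satisfies ℓ < (1/2)(n − √((8χ(D)+1)n)). Then 2(B·D) < B·K, i.e., 2(√n · d − (k(m+1) + (n−k)m)) < n − 3√n. -/
import Mathlib


/-!
Divisor classes on the blowup of `P^2` at `n` very general points are modeled as
pairs `(d, m) : ℤ × (Fin n → ℤ)` representing `dH - ∑ mᵢ Eᵢ`.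
-/

/-- The intersection pairing `D · D' = d d' - ∑ mᵢ mᵢ'`. -/
def pairZ {n : ℕ} (D D' : ℤ × (Fin n → ℤ)) : ℤ :=
  D.1 * D'.1 - ∑ i, D.2 i * D'.2 i

/-- The canonical class `K = -3H + ∑ Eᵢ`, i.e. `(-3; -1, …, -1)`. -/
def KD (n : ℕ) : ℤ × (Fin n → ℤ) := (-3, fun _ => -1)

/-- The Riemann–Roch Euler characteristic `χ(D) = 1 + (1/2) D·(D - K)`. -/
def chi {n : ℕ} (D : ℤ × (Fin n → ℤ)) : ℚ :=
  1 + (pairZ D (D - KD n) : ℚ) / 2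

/-- The real intersection pairing on `ℝ^{1+n}`. -/
def pairR {n : ℕ} (x y : ℝ × (Fin n → ℝ)) : ℝ :=
  x.1 * y.1 - ∑ i, x.2 i * y.2 i

/-- The real vector associated to an integral divisor class. -/
def toR {n : ℕ} (D : ℤ × (Fin n → ℤ)) : ℝ × (Fin n → ℝ) :=
  ((D.1 : ℝ), fun i => (D.2 i : ℝ))

/-- The (real) class `A_t = tH - E = (t; 1, …, 1)`; `B = A_{√n}`. -/
def At (n : ℕ) (t : ℝ) : ℝ × (Fin n → ℝ) := (t, fun _ => 1)

lemma sum_if_lt {R : Type*} [CommRing R] (n k : ℕ) (hk : k ≤ n) (a b : R) :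
    ∑ i : Fin n, (if (i : ℕ) < k then a else b)
      = (k : R) * a + ((n - k : ℕ) : R) * b := by
  rw [Fin.sum_univ_eq_sum_range (fun i => if i < k then a else b), Finset.range_eq_Ico,
    ← Finset.sum_Ico_consecutive _ (Nat.zero_le k) hk]
  have h1 : ∑ i ∈ Finset.Ico 0 k, (if i < k then a else b) = (k : R) * a := by
    rw [Finset.sum_congr rfl (fun i hi => if_pos (Finset.mem_Ico.mp hi).2)]
    simp [nsmul_eq_mul]
  have h2 : ∑ i ∈ Finset.Ico k n, (if i < k then a else b) = ((n - k : ℕ) : R) * b := by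
    rw [Finset.sum_congr rfl (fun i hi => if_neg (not_lt.mpr (Finset.mem_Ico.mp hi).1))]
    simp [nsmul_eq_mul]
  rw [h1, h2]

/-- Proposition 4.7: a balanced class `D = dH - (m+1)E' - mE''` with `d ≥ 0`,
`m ≥ 0`, `1 ≤ χ(D) < (n-1)/8` which is fewer than `(1/2)(n - √((8χ(D)+1)n))`
steps away from having equal multiplicities satisfies `2 B·D < B·K`. -/
theorem two_B_dot_lt_of (n : ℕ) (hn : 1 ≤ n) (k : ℕ) (hk : k ≤ n) (d m : ℤ)
    (D : ℤ × (Fin n → ℤ))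
    (hD : D = (d, fun i : Fin n => if (i : ℕ) < k then m + 1 else m))
    (hd : 0 ≤ d) (hm : 0 ≤ m)
    (hchi1 : 1 ≤ chi D) (hchi2 : chi D < ((n : ℚ) - 1) / 8)
    (hl : (min k (n - k) : ℝ) <
      (1 / 2) * ((n : ℝ) - Real.sqrt ((8 * (chi D : ℝ) + 1) * n))) :
    2 * pairR (At n (Real.sqrt n)) (toR D) <
      pairR (At n (Real.sqrt n)) (toR (KD n)) := by
  set s := Real.sqrt n with hsdef
  have hn1 : (1 : ℝ) ≤ n := by exact_mod_cast hn
  have hm' : (0 : ℝ) ≤ (m : ℝ) := by exact_mod_cast hm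
  have hd' : (0 : ℝ) ≤ (d : ℝ) := by exact_mod_cast hd
  have hs0 : 0 ≤ s := Real.sqrt_nonneg _
  have hs2 : s * s = (n : ℝ) := Real.mul_self_sqrt (by positivity)
  have hnkR : ((n - k : ℕ) : ℝ) = (n : ℝ) - (k : ℝ) := by
    rw [Nat.cast_sub hk]
  -- compute χ(D)
  have hP : pairZ D (D - KD n)
      = d * (d + 3) - ((k : ℤ) * ((m + 1) * (m + 2)) + ((n - k : ℕ) : ℤ) * (m * (m + 1))) := by
    subst hD
    simp only [pairZ, KD, Prod.fst_sub, Prod.snd_sub, Pi.sub_apply]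
    have h : ∀ i : Fin n,
        (if (i : ℕ) < k then m + 1 else m) * ((if (i : ℕ) < k then m + 1 else m) - (-1))
          = if (i : ℕ) < k then (m + 1) * (m + 2) else m * (m + 1) := by
      intro i; split <;> ring
    rw [Finset.sum_congr rfl fun i _ => h i, sum_if_lt n k hk]
    ring
  have hchiR : ((chi D : ℚ) : ℝ)
      = 1 + ((d : ℝ) * ((d : ℝ) + 3)
        - ((k : ℝ) * (((m : ℝ) + 1) * ((m : ℝ) + 2))
          + ((n : ℝ) - (k : ℝ)) * ((m : ℝ) * ((m : ℝ) + 1)))) / 2 := by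
    rw [chi, hP]
    push_cast [Nat.cast_sub hk]
    ring
  have hchi1R : (1 : ℝ) ≤ ((chi D : ℚ) : ℝ) := by exact_mod_cast hchi1
  set X : ℝ := (8 * ((chi D : ℚ) : ℝ) + 1) * n with hXdef
  have hX0 : 0 ≤ X := by nlinarith
  -- the distance to balanced condition
  have hsqrtX : Real.sqrt X < (n : ℝ) - 2 * min (k : ℝ) ((n : ℝ) - (k : ℝ)) := by
    linarith [hl]
  have hXlt : X < ((n : ℝ) - 2 * (k : ℝ)) ^ 2 := by
    have h1 : Real.sqrt X ^ 2 = X := Real.sq_sqrt hX0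
    have h2 : Real.sqrt X ^ 2 < ((n : ℝ) - 2 * min (k : ℝ) ((n : ℝ) - (k : ℝ))) ^ 2 :=
      pow_lt_pow_left₀ hsqrtX (Real.sqrt_nonneg _) (by norm_num)
    have h3 : ((n : ℝ) - 2 * min (k : ℝ) ((n : ℝ) - (k : ℝ))) ^ 2
        = ((n : ℝ) - 2 * (k : ℝ)) ^ 2 := by
      rcases le_total (k : ℝ) ((n : ℝ) - (k : ℝ)) with hle | hle
      · rw [min_eq_left hle]
      · rw [min_eq_right hle]; ring
    rw [h1, h3] at h2
    exact h2
  -- compare squares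
  set a : ℝ := s * (2 * (d : ℝ) + 3) with hadef
  set b : ℝ := (n : ℝ) * (2 * (m : ℝ) + 1) + 2 * (k : ℝ) with hbdef
  have hb0 : 0 ≤ b := by
    have hk0 : (0 : ℝ) ≤ (k : ℝ) := by positivity
    nlinarith
  have ha2 : a ^ 2 = X + 4 * (n : ℝ) ^ 2 * (m : ℝ) * ((m : ℝ) + 1)
      + 8 * (n : ℝ) * (k : ℝ) * ((m : ℝ) + 1) := by
    have h : a ^ 2 = (s * s) * (2 * (d : ℝ) + 3) ^ 2 := by ring
    rw [h, hs2, hXdef, hchiR]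
    ring
  have hb2 : b ^ 2 = ((n : ℝ) - 2 * (k : ℝ)) ^ 2 + 4 * (n : ℝ) ^ 2 * (m : ℝ) * ((m : ℝ) + 1)
      + 8 * (n : ℝ) * (k : ℝ) * ((m : ℝ) + 1) := by
    rw [hbdef]; ring
  have hab : a < b := by
    refine lt_of_pow_lt_pow_left₀ 2 hb0 ?_
    rw [ha2, hb2]
    linarith
  have hab' : 2 * (s * (d : ℝ)) + 3 * s < b := by
    have h : a = 2 * (s * (d : ℝ)) + 3 * s := by rw [hadef]; ring
    linarith [h ▸ hab]
  -- compute the two pairings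
  have hBD : pairR (At n s) (toR D)
      = s * (d : ℝ) - ((k : ℝ) * ((m : ℝ) + 1) + ((n : ℝ) - (k : ℝ)) * (m : ℝ)) := by
    subst hD
    simp only [pairR, At, toR, one_mul]
    have h : ∑ i : Fin n, ((if (i : ℕ) < k then m + 1 else m : ℤ) : ℝ)
        = (k : ℝ) * ((m : ℝ) + 1) + ((n - k : ℕ) : ℝ) * (m : ℝ) := by
      rw [← sum_if_lt n k hk ((m : ℝ) + 1) (m : ℝ)]
      refine Finset.sum_congr rfl fun i _ => ?_
      split <;> push_cast <;> ring
    rw [h, hnkR]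
  have hBK : pairR (At n s) (toR (KD n)) = -3 * s + (n : ℝ) := by
    simp only [pairR, At, toR, KD, one_mul, Int.cast_neg, Int.cast_one,
      Finset.sum_const, Finset.card_univ, Fintype.card_fin, nsmul_eq_mul]
    ring
  rw [hBD, hBK]
  rw [hbdef] at hab'
  nlinarith [hab']
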